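/- Let (X,d) be a metric space with at least two points carrying a doubling measure μ with all balls of positive finite measure. Then for every M > 0 there exists a doubling measure ν on (X,d) whose optimal doubling constant C_ν exceeds M. In other words, the supremum over doubling measures ν of C_ν is infinite. -/

import Mathlib

open MeasureTheory Metric Filter

noncomputable def doublingConstant {X : Type*} [PseudoMetricSpace X] [MeasurableSpace X]
    (μ : Measure X) : ENNReal :=
  ⨆ (x : X) (r : ℝ) (_ : 0 < r), μ (ball x (2 * r)) / μ (ball x r)
theorem stmt_3 {X : Type*} [MetricSpace X] [MeasurableSpace X] [BorelSpace X] (μ : Measure X)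
    (hX : ∃ x y : X, x ≠ y)
    (hpos : ∀ (x : X) (r : ℝ), 0 < r → 0 < μ (ball x r) ∧ μ (ball x r) < ⊤)
    (hdbl : ∃ C : ENNReal, C < ⊤ ∧ ∀ (x : X) (r : ℝ), 0 < r →
      μ (ball x (2 * r)) ≤ C * μ (ball x r)) :
    ∀ M : ENNReal, M < ⊤ → ∃ ν : Measure X,
      (∀ (x : X) (r : ℝ), 0 < r → 0 < ν (ball x r) ∧ ν (ball x r) < ⊤) ∧
      (∃ C : ENNReal, C < ⊤ ∧ ∀ (x : X) (r : ℝ), 0 < r →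
        ν (ball x (2 * r)) ≤ C * ν (ball x r)) ∧
      M < doublingConstant ν := by
  intro M hM
  obtain ⟨x0, y, hxy⟩ := hX
  obtain ⟨C, hC, hCd⟩ := hdbl
  set d : ℝ := dist x0 y with hd_def
  have hd : 0 < d := dist_pos.mpr hxy
  set S : Set X := ball x0 (d / 4) with hS_def
  set B1 : Set X := ball y (3 * d / 4) with hB1_def
  have hSpos : 0 < μ S := (hpos x0 (d / 4) (by linarith)).1
  have hSfin : μ S < ⊤ := (hpos x0 (d / 4) (by linarith)).2
  have hB1pos : 0 < μ B1 := (hpos y (3 * d / 4) (by linarith)).1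
  have hB1fin : μ B1 < ⊤ := (hpos y (3 * d / 4) (by linarith)).2
  set K : ENNReal := (M + 1) * μ B1 / μ S with hK_def
  have hKfin : K < ⊤ := by
    apply ENNReal.div_lt_top
    · exact ENNReal.mul_ne_top (by simp [ENNReal.add_ne_top, hM.ne]) hB1fin.ne
    · exact hSpos.ne'
  set ν : Measure X := μ + K • μ.restrict S with hν_def
  have hνapp : ∀ (x : X) (r : ℝ), ν (ball x r) = μ (ball x r) + K * μ (S ∩ ball x r) := by
    intro x r
    simp [hν_def, Measure.restrict_apply (measurableSet_ball), Set.inter_comm]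
  have hνpos : ∀ (x : X) (r : ℝ), 0 < r → 0 < ν (ball x r) ∧ ν (ball x r) < ⊤ := by
    intro x r hr
    rw [hνapp]
    constructor
    · exact lt_of_lt_of_le (hpos x r hr).1 le_self_add
    · have h1 : μ (S ∩ ball x r) ≤ μ S := measure_mono Set.inter_subset_left
      calc μ (ball x r) + K * μ (S ∩ ball x r) ≤ μ (ball x r) + K * μ S := by
            gcongr
        _ < ⊤ := ENNReal.add_lt_top.mpr ⟨(hpos x r hr).2, ENNReal.mul_lt_top hKfin hSfin⟩
  refine ⟨ν, hνpos, ⟨(1 + K) * C, ?_, ?_⟩, ?_⟩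
  · exact ENNReal.mul_lt_top (by simp [ENNReal.add_lt_top, hKfin]) hC
  · intro x r hr
    have h1 : ν (ball x (2 * r)) ≤ (1 + K) * μ (ball x (2 * r)) := by
      rw [hνapp, add_mul, one_mul]
      exact add_le_add le_rfl (mul_le_mul_right (measure_mono Set.inter_subset_right) K)
    have h2 : μ (ball x r) ≤ ν (ball x r) := by
      rw [hνapp]; exact le_self_add
    calc ν (ball x (2 * r)) ≤ (1 + K) * μ (ball x (2 * r)) := h1
      _ ≤ (1 + K) * (C * μ (ball x r)) := mul_le_mul_right (hCd x r hr) _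
      _ = (1 + K) * C * μ (ball x r) := by ring
      _ ≤ (1 + K) * C * ν (ball x r) := by gcongr
  · -- lower bound on doubling constant
    have hdisj : S ∩ B1 = ∅ := by
      ext z
      simp only [hS_def, hB1_def, Set.mem_inter_iff, mem_ball, Set.mem_empty_iff_false,
        iff_false, not_and]
      intro h1 h2
      have := dist_triangle x0 z y
      rw [dist_comm x0 z] at this
      have : d < d / 4 + 3 * d / 4 := by
        calc d = dist x0 y := rfl
          _ ≤ dist z x0 + dist z y := by rw [dist_comm z x0]; exact dist_triangle _ _ _
          _ < d / 4 + 3 * d / 4 := add_lt_add h1 h2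
      linarith
    have hsub : S ⊆ ball y (2 * (3 * d / 4)) := by
      intro z hz
      simp only [hS_def, mem_ball] at hz ⊢
      have := dist_triangle z x0 y
      rw [dist_comm x0 y] at hd_def
      calc dist z y ≤ dist z x0 + dist x0 y := dist_triangle _ _ _
        _ < d / 4 + d := by linarith
        _ ≤ 2 * (3 * d / 4) := by linarith
    have hνB1 : ν B1 = μ B1 := by
      have : ν B1 = μ B1 + K * μ (S ∩ B1) := by
        simp [hν_def, hB1_def, Measure.restrict_apply (measurableSet_ball), Set.inter_comm]
      rw [this, hdisj]; simp
    have hνbig : (M + 1) * μ B1 ≤ ν (ball y (2 * (3 * d / 4))) := by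
      have h1 : K * μ S ≤ ν (ball y (2 * (3 * d / 4))) := by
        rw [hνapp]
        have : μ (S ∩ ball y (2 * (3 * d / 4))) = μ S := by
          rw [Set.inter_eq_self_of_subset_left hsub]
        rw [this]
        exact le_add_self
      have h2 : K * μ S = (M + 1) * μ B1 := by
        rw [hK_def, ENNReal.div_mul_cancel hSpos.ne' hSfin.ne]
      rwa [h2] at h1
    have hratio : M + 1 ≤ ν (ball y (2 * (3 * d / 4))) / ν (ball y (3 * d / 4)) := by
      rw [show (ball y (3 * d / 4) : Set X) = B1 from rfl, hνB1]
      rw [ENNReal.le_div_iff_mul_le (Or.inl hB1pos.ne') (Or.inl hB1fin.ne)]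
      exact hνbig
    have hle : M + 1 ≤ doublingConstant ν := by
      refine le_trans hratio ?_
      refine le_trans ?_ (le_iSup _ y)
      refine le_trans ?_ (le_iSup _ (3 * d / 4))
      exact le_trans (le_of_eq rfl) (le_iSup (fun _ : 0 < 3 * d / 4 => ν (ball y (2 * (3 * d / 4))) / ν (ball y (3 * d / 4))) (by linarith))
    calc M < M + 1 := ENNReal.lt_add_right hM.ne one_ne_zero
      _ ≤ doublingConstant ν := hle
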